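/- Let D be a digraph with at least one arc. Then the following are equivalent: (i) ⟨D⟩ is a left zero semigroup; (ii) ⟨D⟩ has a unique L-class; (iii) D has exactly one connected component K containing arcs, and the reverse digraph K⁻¹ = {(y,x) : (x,y) an arc of K} is a fan — equivalently, there is a vertex x such that every arc of D has the form (x,y). -/

import Mathlib

/-- The transformation of `{1,…,n}` sending `a` to `b` and fixing all other points. -/
def arcT {n : ℕ} (a b : Fin n) : Fin n → Fin n := fun v => if v = a then b else v

/-- The semigroup `⟨D⟩` generated by the arcs of the digraph `D`; transformations act on
the right, so a product `ε₁ε₂⋯ε_k` is the function `ε_k ∘ ⋯ ∘ ε₁`. -/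
def genSg {n : ℕ} (D : Set (Fin n × Fin n)) : Set (Fin n → Fin n) :=
  { α | ∃ l : List (Fin n × Fin n), l ≠ [] ∧ (∀ p ∈ l, p ∈ D) ∧
      α = l.foldl (fun f p => arcT p.1 p.2 ∘ f) id }

/-- The product `x·y` in the right-action convention: apply `x` first, then `y`. -/
def sgMul {n : ℕ} (x y : Fin n → Fin n) : Fin n → Fin n := y ∘ x

/-- The right ideal `xS¹ = {x} ∪ xS`. -/
def rIdeal {n : ℕ} (S : Set (Fin n → Fin n)) (x : Fin n → Fin n) : Set (Fin n → Fin n) :=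
  insert x { y | ∃ s ∈ S, y = sgMul x s }

/-- The left ideal `S¹x = {x} ∪ Sx`. -/
def lIdeal {n : ℕ} (S : Set (Fin n → Fin n)) (x : Fin n → Fin n) : Set (Fin n → Fin n) :=
  insert x { y | ∃ s ∈ S, y = sgMul s x }

/-- The two-sided ideal `S¹xS¹`. -/
def jIdeal {n : ℕ} (S : Set (Fin n → Fin n)) (x : Fin n → Fin n) : Set (Fin n → Fin n) :=
  { y | ∃ s ∈ insert id S, ∃ t ∈ insert id S, y = sgMul s (sgMul x t) }

def RRel {n : ℕ} (S : Set (Fin n → Fin n)) (x y : Fin n → Fin n) : Prop :=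
  rIdeal S x = rIdeal S y

def LRel {n : ℕ} (S : Set (Fin n → Fin n)) (x y : Fin n → Fin n) : Prop :=
  lIdeal S x = lIdeal S y

def JRel {n : ℕ} (S : Set (Fin n → Fin n)) (x y : Fin n → Fin n) : Prop :=
  jIdeal S x = jIdeal S y

def RTrivial {n : ℕ} (S : Set (Fin n → Fin n)) : Prop :=
  ∀ x ∈ S, ∀ y ∈ S, RRel S x y → x = y

def LTrivial {n : ℕ} (S : Set (Fin n → Fin n)) : Prop :=
  ∀ x ∈ S, ∀ y ∈ S, LRel S x y → x = y

def HTrivial {n : ℕ} (S : Set (Fin n → Fin n)) : Prop :=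
  ∀ x ∈ S, ∀ y ∈ S, RRel S x y → LRel S x y → x = y

def JTrivial {n : ℕ} (S : Set (Fin n → Fin n)) : Prop :=
  ∀ x ∈ S, ∀ y ∈ S, JRel S x y → x = y

/-- `α` has a cycle of length `k`: `k` distinct points `a₀,…,a_{k-1}` with
`α(aᵢ) = a_{i+1 mod k}`. -/
def IsCycleOf {n : ℕ} (α : Fin n → Fin n) (k : ℕ) : Prop :=
  0 < k ∧ ∃ a : ZMod k → Fin n, Function.Injective a ∧ ∀ i, α (a i) = a (i + 1)

/-- `l(D)`: the maximal length of a cycle of an element of `⟨D⟩`. -/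
noncomputable def lD {n : ℕ} (D : Set (Fin n × Fin n)) : ℕ :=
  sSup { k | ∃ α ∈ genSg D, IsCycleOf α k }

/-- The arc set of a graph. -/
def arcsOf {n : ℕ} (G : SimpleGraph (Fin n)) : Set (Fin n × Fin n) :=
  { p | G.Adj p.1 p.2 }

/-- `l(G)` for a graph `G`. -/
noncomputable def lG {n : ℕ} (G : SimpleGraph (Fin n)) : ℕ := lD (arcsOf G)

/-- Reachability along directed walks of `D`. -/
def dreach {n : ℕ} (D : Set (Fin n × Fin n)) : Fin n → Fin n → Prop :=
  Relation.ReflTransGen (fun a b => (a, b) ∈ D)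

/-- The strong component of the vertex `v`. -/
def strongComp {n : ℕ} (D : Set (Fin n × Fin n)) (v : Fin n) : Set (Fin n) :=
  { u | dreach D u v ∧ dreach D v u }

/-- The underlying graph of the digraph `D`. -/
def underlying {n : ℕ} (D : Set (Fin n × Fin n)) : SimpleGraph (Fin n) where
  Adj a b := a ≠ b ∧ ((a, b) ∈ D ∨ (b, a) ∈ D)
  symm := ⟨fun a b h => ⟨h.1.symm, h.2.symm⟩⟩
  loopless := ⟨fun a h => h.1 rfl⟩

/-- `v 0, v 1, …, v r` is a cycle of the digraph `D`. -/
def IsDCycle {n : ℕ} (D : Set (Fin n × Fin n)) (r : ℕ) (v : ℕ → Fin n) : Prop :=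
  1 ≤ r ∧ v r = v 0 ∧ (∀ i < r, ∀ j < r, v i = v j → i = j) ∧
    ∀ i < r, (v i, v (i + 1)) ∈ D

def HasDCycle {n : ℕ} (D : Set (Fin n × Fin n)) : Prop := ∃ r v, IsDCycle D r v

def DAcyclic {n : ℕ} (D : Set (Fin n × Fin n)) : Prop := ¬ HasDCycle D

/-- `G` is a subgroup contained in the transformation semigroup `S`. -/
def IsSubgroupIn {n : ℕ} (S G : Set (Fin n → Fin n)) : Prop :=
  G ⊆ S ∧ (∀ x ∈ G, ∀ y ∈ G, sgMul x y ∈ G) ∧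
    ∃ e ∈ G, (∀ x ∈ G, sgMul e x = x ∧ sgMul x e = x) ∧
      ∀ x ∈ G, ∃ y ∈ G, sgMul x y = e ∧ sgMul y x = e

/-- Every subgroup of `S` is trivial. -/
def SgAperiodic {n : ℕ} (S : Set (Fin n → Fin n)) : Prop :=
  ∀ G, IsSubgroupIn S G → G.Subsingleton

lemma arcT_mem_genSg {n : ℕ} {D : Set (Fin n × Fin n)} {a b : Fin n} (h : (a, b) ∈ D) :
    arcT a b ∈ genSg D := by
  refine ⟨[(a, b)], by simp, by simp [h], ?_⟩
  simp [List.foldl]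

lemma foldl_fix {n : ℕ} (x : Fin n) {D : Set (Fin n × Fin n)}
    (hD : ∀ p ∈ D, p.1 = x)
    (l : List (Fin n × Fin n)) (hl : ∀ p ∈ l, p ∈ D)
    (g : Fin n → Fin n) (hg1 : ∀ v, v ≠ x → g v = v) (hg2 : g x ≠ x) :
    l.foldl (fun f p => arcT p.1 p.2 ∘ f) g = g := by
  induction l generalizing g with
  | nil => rfl
  | cons p t ih =>
    have hp := hl p List.mem_cons_self
    have hpx : p.1 = x := hD p hp
    have hstep : arcT p.1 p.2 ∘ g = g := by
      funext v
      by_cases hv : v = x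
      · have h1 : g v ≠ p.1 := by rw [hpx, hv]; exact hv ▸ hg2
        simp [arcT, Function.comp, h1]
      · simp [arcT, Function.comp, hg1 v hv, hpx, hv]
    rw [List.foldl_cons, hstep]
    exact ih (fun q hq => hl q (List.mem_cons_of_mem _ hq)) g hg1 hg2

lemma genSg_struct {n : ℕ} {D : Set (Fin n × Fin n)} (hloop : ∀ u : Fin n, (u, u) ∉ D)
    {x : Fin n} (hD : ∀ p ∈ D, p.1 = x) {α : Fin n → Fin n} (hα : α ∈ genSg D) :
    (∀ v, v ≠ x → α v = v) ∧ α x ≠ x := by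
  obtain ⟨l, hl, hmem, rfl⟩ := hα
  cases l with
  | nil => exact absurd rfl hl
  | cons p t =>
    have hp : p ∈ D := hmem p List.mem_cons_self
    have hpx : p.1 = x := hD p hp
    have hp2 : p.2 ≠ x := by
      intro h
      have hpeq : p = (x, x) := Prod.ext hpx h
      exact hloop x (hpeq ▸ hp)
    have hg1 : ∀ v, v ≠ x → (arcT p.1 p.2 ∘ id) v = v := by
      intro v hv
      simp [arcT, Function.comp, hpx, hv]
    have hg2 : (arcT p.1 p.2 ∘ id) x ≠ x := by
      simp [arcT, Function.comp, hpx]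
      exact hp2
    have hfix := foldl_fix x hD t (fun q hq => hmem q (List.mem_cons_of_mem _ hq)) _ hg1 hg2
    rw [List.foldl_cons, hfix]
    exact ⟨hg1, hg2⟩

/-- The following are equivalent: `⟨D⟩` is a left zero semigroup;
`⟨D⟩` has a unique `L`-class; all arcs of `D` start at one common vertex `x`
(equivalently, `D` has a unique component containing arcs and its reverse is a fan). -/
theorem stmt19 (n : ℕ) (D : Set (Fin n × Fin n)) (hloop : ∀ u : Fin n, (u, u) ∉ D)
    (hne : D.Nonempty) :
    List.TFAE [
      ∀ a ∈ genSg D, ∀ b ∈ genSg D, sgMul a b = a,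
      ∀ x ∈ genSg D, ∀ y ∈ genSg D, LRel (genSg D) x y,
      ∃ x : Fin n, ∀ p ∈ D, p.1 = x] := by
  tfae_have 1 → 2 := by
    intro h x hx y hy
    have key : ∀ z ∈ genSg D, lIdeal (genSg D) z = genSg D := by
      intro z hz
      ext w
      simp only [lIdeal, Set.mem_insert_iff, Set.mem_setOf_eq]
      constructor
      · rintro (rfl | ⟨s, hs, rfl⟩)
        · exact hz
        · rw [h s hs z hz]; exact hs
      · intro hw
        exact Or.inr ⟨w, hw, (h w hw z hz).symm⟩
    unfold LRel
    rw [key x hx, key y hy]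
  tfae_have 2 → 3 := by
    intro h
    obtain ⟨⟨a, b⟩, hab⟩ := hne
    refine ⟨a, ?_⟩
    rintro ⟨c, d⟩ hcd
    by_contra hca
    have hca : c ≠ a := fun h' => hca h'
    have hcned : c ≠ d := fun h' => hloop c (h' ▸ hcd)
    have hα := arcT_mem_genSg hab
    have hβ := arcT_mem_genSg hcd
    have hL : lIdeal (genSg D) (arcT a b) = lIdeal (genSg D) (arcT c d) :=
      h _ hα _ hβ
    have hmem : arcT a b ∈ lIdeal (genSg D) (arcT c d) := by
      rw [← hL]; exact Set.mem_insert _ _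
    have hβne : ∀ v, arcT c d v ≠ c := by
      intro v
      simp only [arcT]
      split
      · exact fun h' => hcned h'.symm
      · assumption
    have hac : arcT a b c = c := by simp [arcT, hca]
    simp only [lIdeal, Set.mem_insert_iff, Set.mem_setOf_eq] at hmem
    rcases hmem with heq | ⟨s, hs, heq⟩
    · have := hβne c
      rw [← heq, hac] at this
      exact this rfl
    · have : arcT a b c = arcT c d (s c) := by rw [heq]; rfl
      rw [hac] at this
      exact hβne (s c) this.symm
  tfae_have 3 → 1 := by
    rintro ⟨x, hx⟩ a ha b hb
    obtain ⟨ha1, ha2⟩ := genSg_struct hloop hx ha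
    obtain ⟨hb1, hb2⟩ := genSg_struct hloop hx hb
    funext v
    show b (a v) = a v
    by_cases hv : v = x
    · subst hv
      exact hb1 _ ha2
    · rw [ha1 v hv]
      exact hb1 v hv
  tfae_finish
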